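/- For the seed π = #_⋯_# (one #, then r letters _, then one #) over 𝒜 = {0,1}, every state of the subset seed automaton S_π is reachable: for each non-final state ⟨X,t⟩ with X ⊆ {2,…,r+1} and max X + t ≤ r+1 there is a word in {0,1}^* which, read from the initial state ⟨∅,0⟩, ends in ⟨X,t⟩, and likewise the final state is reachable. -/

import Mathlib

variable {A : Type*}

/-- One transition of the subset seed automaton `S_π`: the state `none` is the final sink
state, a state `some (X, t)` is the non-final state `⟨X,t⟩`. -/
def seedStep [DecidableEq A] (one : A) (π : ℕ → Finset A) (s : ℕ) :
    Option (Finset ℕ × ℕ) → A → Option (Finset ℕ × ℕ)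
  | none, _ => none
  | some (X, t), a =>
    if a = one then
      if X.sup id + (t + 1) = s then none else some (X, t + 1)
    else
      let Y : Finset ℕ := ((Finset.Icc 1 (t + 1)).filter fun x => a ∈ π x) ∪
        ((X.filter fun x => x + t + 1 ≤ s ∧ a ∈ π (x + t + 1)).image fun x => x + t + 1)
      if Y.sup id = s then none else some (Y, 0)

/-- Reading a word from a state, applying transitions letter by letter. -/
def seedRead [DecidableEq A] (one : A) (π : ℕ → Finset A) (s : ℕ)
    (q : Option (Finset ℕ × ℕ)) (w : List A) : Option (Finset ℕ × ℕ) :=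
  w.foldl (seedStep one π s) q

/-- `π` matches the alignment `w` at the (1-based) position `p`. -/
def seedMatches (one : A) (π : ℕ → Finset A) (s : ℕ) (w : List A) (p : ℕ) : Prop :=
  1 ≤ p ∧ p + s ≤ w.length + 1 ∧
    ∀ i, 1 ≤ i → i ≤ s → w.getD (p + i - 2) one ∈ π i


/-- The seed `#_⋯_#` (one `#`, then `r` letters `_`, then one `#`) over the alphabet
`𝒜 = {0,1}` modelled by `Bool` with `1 = true` and `0 = false`: position `1` and
position `r+2` carry `# = {1}`, all other positions carry `_ = {0,1}`.
Its span is `s = r+2` and `R_π = {2,…,r+1}`. -/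
def hrSeed (r : ℕ) : ℕ → Finset Bool :=
  fun i => if i = 1 ∨ i = r + 2 then {true} else {false, true}

-- auxiliary
def hrReach (r : ℕ) (q : Option (Finset ℕ × ℕ)) : Prop :=
  ∃ w : List Bool, seedRead true (hrSeed r) (r + 2) (some (∅, 0)) w = q

lemma hrReach_step {r : ℕ} {q : Option (Finset ℕ × ℕ)} (h : hrReach r q) (a : Bool) :
    hrReach r (seedStep true (hrSeed r) (r + 2) q a) := by
  obtain ⟨w, hw⟩ := h
  refine ⟨w ++ [a], ?_⟩
  simp only [seedRead, List.foldl_append] at hw ⊢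
  rw [hw]
  rfl

lemma step_true {r : ℕ} {X : Finset ℕ} {k : ℕ} (h : X.sup id + (k + 1) ≠ r + 2) :
    seedStep true (hrSeed r) (r + 2) (some (X, k)) true = some (X, k + 1) := by
  simp [seedStep, h]

lemma false_mem_hrSeed {r x : ℕ} : false ∈ hrSeed r x ↔ ¬(x = 1 ∨ x = r + 2) := by
  unfold hrSeed
  split <;> simp_all

lemma step_false {r t : ℕ} {X : Finset ℕ} (ht : t + 1 ≤ r + 1)
    (hX : ∀ x ∈ X, 1 ≤ x ∧ x + t + 1 ≤ r + 1) :
    seedStep true (hrSeed r) (r + 2) (some (X, t)) false =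
      some (Finset.Icc 2 (t + 1) ∪ X.image (fun x => x + t + 1), 0) := by
  have hfilter1 : (Finset.Icc 1 (t + 1)).filter (fun x => false ∈ hrSeed r x)
      = Finset.Icc 2 (t + 1) := by
    ext x
    simp only [Finset.mem_filter, Finset.mem_Icc, false_mem_hrSeed]
    omega
  have hfilter2 : X.filter (fun x => x + t + 1 ≤ r + 2 ∧ false ∈ hrSeed r (x + t + 1)) = X := by
    apply Finset.filter_true_of_mem
    intro x hx
    have := hX x hx
    refine ⟨by omega, ?_⟩
    rw [false_mem_hrSeed]
    omega
  have hsup : (Finset.Icc 2 (t + 1) ∪ X.image (fun x => x + t + 1)).sup id ≠ r + 2 := by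
    have hle : (Finset.Icc 2 (t + 1) ∪ X.image (fun x => x + t + 1)).sup id ≤ r + 1 := by
      apply Finset.sup_le
      intro x hx
      simp only [Finset.mem_union, Finset.mem_Icc, Finset.mem_image] at hx
      rcases hx with h | ⟨y, hy, rfl⟩
      · simp only [id]; omega
      · simpa using (hX y hy).2
    omega
  simp only [seedStep]
  rw [if_neg (by simp), hfilter1, hfilter2, if_neg hsup]

lemma hrReach_trues {r : ℕ} {X : Finset ℕ} (j : ℕ) {k : ℕ}
    (hs : X.sup id + k + j ≤ r + 1) (h : hrReach r (some (X, k))) :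
    hrReach r (some (X, k + j)) := by
  induction j generalizing k with
  | zero => exact h
  | succ j ih =>
    have h1 := hrReach_step h true
    rw [step_true (by omega)] at h1
    have h2 := ih (k := k + 1) (by omega) h1
    have he : k + 1 + j = k + (j + 1) := by omega
    rwa [he] at h2

lemma hrReach_shift {r : ℕ} (j : ℕ) {X : Finset ℕ}
    (hX : ∀ x ∈ X, 2 ≤ x ∧ x + j ≤ r + 1) (h : hrReach r (some (X, 0))) :
    hrReach r (some (X.image (fun x => x + j), 0)) := by
  induction j with
  | zero => simpa using h
  | succ j ih =>
    have h1 := ih (fun x hx => ⟨(hX x hx).1, by have := (hX x hx).2; omega⟩)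
    have h2 := hrReach_step h1 false
    rw [step_false (t := 0) (by omega) ?_] at h2
    · have he : Finset.Icc 2 (0 + 1) ∪ (X.image (fun x => x + j)).image (fun x => x + 0 + 1)
          = X.image (fun x => x + (j + 1)) := by
        rw [Finset.Icc_eq_empty (by omega), Finset.empty_union, Finset.image_image]
        rfl
      rwa [he] at h2
    · rintro x hx
      simp only [Finset.mem_image] at hx
      obtain ⟨y, hy, rfl⟩ := hx
      have := hX y hy
      omega

lemma hrReach_zero (r : ℕ) : ∀ n (X : Finset ℕ), X.card ≤ n →
    X ⊆ Finset.Icc 2 (r + 1) → hrReach r (some (X, 0)) := by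
  intro n
  induction n with
  | zero =>
    intro X hc _
    have hX : X = ∅ := Finset.card_eq_zero.mp (Nat.le_antisymm hc (Nat.zero_le _))
    subst hX
    exact ⟨[], rfl⟩
  | succ n ih =>
    intro X hc hsub
    rcases eq_or_ne X ∅ with rfl | hne
    · exact ⟨[], rfl⟩
    have hXne : X.Nonempty := Finset.nonempty_iff_ne_empty.mpr hne
    set m := X.min' hXne with hmdef
    have hm : m ∈ X := X.min'_mem hXne
    have hmin : ∀ x ∈ X, m ≤ x := fun x hx => X.min'_le x hx
    have hm2 : 2 ≤ m := (Finset.mem_Icc.mp (hsub hm)).1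
    have hmr : m ≤ r + 1 := (Finset.mem_Icc.mp (hsub hm)).2
    have hex : ∃ k, m + k ∉ X := by
      refine ⟨r + 2, fun hmem => ?_⟩
      have := (Finset.mem_Icc.mp (hsub hmem)).2
      omega
    set c := Nat.find hex with hcdef
    have hcX : m + c ∉ X := Nat.find_spec hex
    have hrun : ∀ k < c, m + k ∈ X := by
      intro k hk
      exact not_not.mp (Nat.find_min hex hk)
    have hc1 : 1 ≤ c := by
      rcases Nat.eq_zero_or_pos c with h0 | h
      · exfalso; apply hcX; rw [h0, Nat.add_zero]; exact hm
      · exact h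
    have hcr : m + c - 1 ≤ r + 1 := by
      have := (Finset.mem_Icc.mp (hsub (hrun (c - 1) (by omega)))).2
      omega
    set X'' := (X.filter (fun x => m + c ≤ x)).image (fun x => x - (m + c - 1)) with hX''def
    have hX''mem : ∀ y ∈ X'', ∃ x ∈ X, m + c + 1 ≤ x ∧ x ≤ r + 1 ∧ y = x - (m + c - 1) := by
      intro y hy
      rw [hX''def] at hy
      simp only [Finset.mem_image, Finset.mem_filter] at hy
      obtain ⟨x, ⟨hx, hxc⟩, rfl⟩ := hy
      have hne' : x ≠ m + c := fun h => hcX (h ▸ hx)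
      exact ⟨x, hx, by omega, (Finset.mem_Icc.mp (hsub hx)).2, rfl⟩
    have hX''sub : X'' ⊆ Finset.Icc 2 (r + 1) := by
      intro y hy
      obtain ⟨x, _, h1, h2, rfl⟩ := hX''mem y hy
      rw [Finset.mem_Icc]
      omega
    have hX''card : X''.card ≤ n := by
      have h1 : X''.card ≤ (X.filter (fun x => m + c ≤ x)).card := Finset.card_image_le
      have h2 : X.filter (fun x => m + c ≤ x) ⊂ X :=
        Finset.filter_ssubset.mpr ⟨m, hm, by omega⟩
      have := Finset.card_lt_card h2
      omega
    have h0 := ih X'' hX''card hX''sub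
    have hsup'' : X''.sup id ≤ r - c := by
      apply Finset.sup_le
      intro y hy
      obtain ⟨x, _, h1, h2, rfl⟩ := hX''mem y hy
      simp only [id]
      omega
    have h1 : hrReach r (some (X'', c)) := by
      have := hrReach_trues c (k := 0) (by omega) h0
      simpa using this
    have hside1 : ∀ y ∈ X'', 1 ≤ y ∧ y + c + 1 ≤ r + 1 := by
      intro y hy
      obtain ⟨x, _, ha, hb, rfl⟩ := hX''mem y hy
      omega
    have h2 := hrReach_step h1 false
    rw [step_false (by omega) hside1] at h2
    have hside2 : ∀ y ∈ Finset.Icc 2 (c + 1) ∪ X''.image (fun x => x + c + 1),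
        2 ≤ y ∧ y + (m - 2) ≤ r + 1 := by
      intro y hy
      simp only [Finset.mem_union, Finset.mem_Icc, Finset.mem_image] at hy
      rcases hy with hy | ⟨z, hz, rfl⟩
      · omega
      · obtain ⟨x, _, ha, hb, rfl⟩ := hX''mem z hz
        omega
    have h3 := hrReach_shift (m - 2) hside2 h2
    have hset : (Finset.Icc 2 (c + 1) ∪ X''.image (fun x => x + c + 1)).image
        (fun x => x + (m - 2)) = X := by
      ext x
      simp only [Finset.mem_image, Finset.mem_union, Finset.mem_Icc]
      constructor
      · rintro ⟨a, ha | ⟨z, hz, rfl⟩, rfl⟩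
        · have he : a + (m - 2) = m + (a - 2) := by omega
          rw [he]
          exact hrun (a - 2) (by omega)
        · obtain ⟨x, hx, hia, hib, rfl⟩ := hX''mem z hz
          have he : x - (m + c - 1) + c + 1 + (m - 2) = x := by omega
          rwa [he]
      · intro hx
        have hxm := hmin x hx
        by_cases hcase : x ≤ m + c - 1
        · exact ⟨x - (m - 2), Or.inl (by omega), by omega⟩
        · have hxc : x ≠ m + c := fun h => hcX (h ▸ hx)
          refine ⟨x - (m - 2), Or.inr ⟨x - (m + c - 1), ?_, by omega⟩, by omega⟩
          rw [hX''def]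
          simp only [Finset.mem_image, Finset.mem_filter]
          exact ⟨x, ⟨hx, by omega⟩, rfl⟩
    rwa [hset] at h3


/-- For the seed `π = #_⋯_#` over `{0,1}`, every state of `S_π` is reachable: every
non-final state `⟨X,t⟩` (with `X ⊆ {2,…,r+1}` and `max X + t ≤ r+1 = s-1`) is reached by
some word read from the initial state `⟨∅,0⟩`, and so is the final state. -/
theorem stmt_5 (r : ℕ) :
    (∀ (X : Finset ℕ) (t : ℕ), X ⊆ Finset.Icc 2 (r + 1) → X.sup id + t ≤ r + 1 →
      ∃ w : List Bool, seedRead true (hrSeed r) (r + 2) (some (∅, 0)) w = some (X, t)) ∧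
    ∃ w : List Bool, seedRead true (hrSeed r) (r + 2) (some (∅, 0)) w = none := by
  constructor
  · intro X t hsub hsup
    have h0 := hrReach_zero r X.card X le_rfl hsub
    have h1 := hrReach_trues t (k := 0) (by omega) h0
    simpa [hrReach] using h1
  · have h1 : hrReach r (some (∅, r + 1)) := by
      have h00 : hrReach r (some (∅, 0)) := ⟨[], rfl⟩
      have := hrReach_trues (X := (∅ : Finset ℕ)) (r + 1) (k := 0) (by simp) h00
      simpa using this
    have h2 := hrReach_step h1 true
    have he : seedStep true (hrSeed r) (r + 2) (some (∅, r + 1)) true = none := by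
      simp [seedStep]
    rwa [he] at h2
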